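/- Let p > 1 and δ ≥ 0. Define A(a) = (δ+|a|)^{p-2} a, φ'(t) = (δ+t)^{p-2} t, φ*(t) = sup_{s≥0}(st − φ(s)) where φ(t)=∫₀ᵗ φ'(s) ds, and for c ≥ 0 the shifted conjugate (φ*)_c(t) := ∫₀ᵗ (φ*)'(c+s)·(s/(c+s)) ds. Also define (φ_c)*(t) := sup_{s≥0}(st − φ_c(s)) where φ_c(t)=∫₀ᵗ φ'(c+s)(s/(c+s)) ds. Then there exist constants depending only on p such that for all a ∈ ℝ^d and t ≥ 0: (φ*)_{|A(a)|}(t) ∼ (φ_{|a|})*(t), i.e., each side is bounded above and below by constant multiples of the other. -/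

import Mathlib

/-- `φ(t) = ∫₀ᵗ (δ+s)^(p-2) s ds`. -/
noncomputable def phiFn (p δ t : ℝ) : ℝ :=
  ∫ s in (0:ℝ)..t, (δ + s) ^ (p - 2) * s

/-- The Fenchel conjugate `ψ*(t) = sup_{s ≥ 0} (s t − ψ s)`. -/
noncomputable def fconj (ψ : ℝ → ℝ) (t : ℝ) : ℝ :=
  sSup ((fun s => s * t - ψ s) '' Set.Ici 0)

/-- The shifted N-function `φ_c(t) = ∫₀ᵗ φ'(c+s) · s/(c+s) ds`, where
`φ'(r) = (δ+r)^(p-2) r`. -/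
noncomputable def shiftPhi (p δ c t : ℝ) : ℝ :=
  ∫ s in (0:ℝ)..t, ((δ + (c + s)) ^ (p - 2) * (c + s)) * (s / (c + s))

/-- The shift of a general N-function `ψ` by `c ≥ 0`:
`ψ_c(t) = ∫₀ᵗ ψ'(c+s) · s/(c+s) ds`. -/
noncomputable def shiftOf (ψ : ℝ → ℝ) (c t : ℝ) : ℝ :=
  ∫ s in (0:ℝ)..t, deriv ψ (c + s) * (s / (c + s))

namespace Stmt7A
open Set Filter intervalIntegral

/-- odd extension of `φ'` with parameter `δ` -/
noncomputable def fE (p δ r : ℝ) : ℝ := (δ + |r|) ^ (p - 2) * r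

noncomputable def mexp (p : ℝ) : ℝ := min 1 (p - 1)

lemma mexp_pos {p : ℝ} (hp : 1 < p) : 0 < mexp p := lt_min one_pos (by linarith)

lemma mexp_le_one (p : ℝ) : mexp p ≤ 1 := min_le_left _ _

lemma fE_zero (p δ : ℝ) : fE p δ 0 = 0 := by simp [fE]

lemma fE_eq {p δ r : ℝ} (hr : 0 ≤ r) : fE p δ r = (δ + r) ^ (p - 2) * r := by
  rw [fE, abs_of_nonneg hr]

lemma fE_nonneg {p δ r : ℝ} (hδ : 0 ≤ δ) (hr : 0 ≤ r) : 0 ≤ fE p δ r := by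
  rw [fE]
  exact mul_nonneg (Real.rpow_nonneg (by positivity) _) hr

lemma fE_odd (p δ r : ℝ) : fE p δ (-r) = - fE p δ r := by
  simp [fE, abs_neg, mul_comm]

lemma fE_pos {p δ r : ℝ} (hδ : 0 ≤ δ) (hr : 0 < r) : 0 < fE p δ r := by
  rw [fE_eq hr.le]
  exact mul_pos (Real.rpow_pos_of_pos (by linarith) _) hr

/-- the key scaling lower bound -/
lemma fE_scale {p δ r Λ : ℝ} (hp : 1 < p) (hδ : 0 ≤ δ) (hr : 0 ≤ r) (hΛ : 1 ≤ Λ) :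
    Λ ^ mexp p * fE p δ r ≤ fE p δ (Λ * r) := by
  rcases hr.eq_or_lt with rfl | hr
  · simp [fE_zero]
  have hΛ0 : (0:ℝ) < Λ := by linarith
  have hδr : (0:ℝ) < δ + r := by linarith
  rw [fE_eq hr.le, fE_eq (by positivity)]
  rcases le_or_gt 2 p with h2 | h2
  · have hm : mexp p = 1 := min_eq_left (by linarith)
    rw [hm, Real.rpow_one]
    have hb : (δ + r) ^ (p - 2) ≤ (δ + Λ * r) ^ (p - 2) :=
      Real.rpow_le_rpow hδr.le (by nlinarith) (by linarith)
    calc Λ * ((δ + r) ^ (p - 2) * r) = (δ + r) ^ (p - 2) * (Λ * r) := by ring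
      _ ≤ (δ + Λ * r) ^ (p - 2) * (Λ * r) := by
          exact mul_le_mul_of_nonneg_right hb (by positivity)
  · have hm : mexp p = p - 1 := min_eq_right (by linarith)
    rw [hm]
    have h1 : Λ ^ (p - 1) = Λ ^ (p - 2) * Λ := by
      rw [show p - 1 = (p-2) + 1 by ring, Real.rpow_add hΛ0, Real.rpow_one]
    have h2' : Λ ^ (p - 2) * (δ + r) ^ (p - 2) ≤ (δ + Λ * r) ^ (p - 2) := by
      rw [← Real.mul_rpow hΛ0.le hδr.le]
      exact Real.rpow_le_rpow_of_nonpos (by positivity) (by nlinarith) (by linarith)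
    calc Λ ^ (p - 1) * ((δ + r) ^ (p - 2) * r)
        = (Λ ^ (p - 2) * (δ + r) ^ (p - 2)) * r * Λ := by rw [h1]; ring
      _ ≤ (δ + Λ * r) ^ (p - 2) * r * Λ := by
          apply mul_le_mul_of_nonneg_right (mul_le_mul_of_nonneg_right h2' hr.le) hΛ0.le
      _ = (δ + Λ * r) ^ (p - 2) * (Λ * r) := by ring

lemma fE_strictMonoOn {p δ : ℝ} (hp : 1 < p) (hδ : 0 ≤ δ) :
    StrictMonoOn (fE p δ) (Ici 0) := by
  intro r hr r' hr' hlt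
  simp only [mem_Ici] at hr hr'
  rcases hr.eq_or_lt with rfl | hr0
  · rw [fE_zero]; exact fE_pos hδ hlt
  · have hΛ : 1 < r' / r := (one_lt_div hr0).2 hlt
    have := fE_scale (Λ := r'/r) hp hδ hr0.le hΛ.le
    rw [div_mul_cancel₀ _ hr0.ne'] at this
    have h1 : 1 < (r'/r) ^ mexp p :=
      (Real.one_lt_rpow_iff_of_pos (by linarith)).2 (Or.inl ⟨hΛ, mexp_pos hp⟩)
    nlinarith [fE_pos (p := p) hδ hr0]

lemma fE_strictMono {p δ : ℝ} (hp : 1 < p) (hδ : 0 ≤ δ) : StrictMono (fE p δ) :=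
  strictMono_of_odd_strictMonoOn_nonneg (fE_odd p δ) (fE_strictMonoOn hp hδ)

lemma fE_continuous {p δ : ℝ} (hp : 1 < p) (hδ : 0 ≤ δ) : Continuous (fE p δ) := by
  rw [continuous_iff_continuousAt]
  intro r
  rcases eq_or_ne (δ + |r|) 0 with h0 | hne
  · -- δ = 0 and r = 0
    have hδ0 : δ = 0 := by have := abs_nonneg r; linarith
    have hr0 : r = 0 := by
      have h1 : |r| = 0 := by have := abs_nonneg r; linarith
      exact abs_eq_zero.mp h1
    subst hδ0; subst hr0
    have key : ∀ x : ℝ, ‖fE p 0 x‖ ≤ |x| ^ (p - 1) := by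
      intro x
      rcases eq_or_ne x 0 with rfl | hx
      · simp [fE_zero, Real.zero_rpow (by linarith : p - 1 ≠ 0)]
      · have hax : (0:ℝ) < |x| := abs_pos.2 hx
        rw [fE, Real.norm_eq_abs, abs_mul, zero_add,
          abs_of_nonneg (Real.rpow_nonneg hax.le _),
          show p - 1 = (p - 2) + 1 by ring, Real.rpow_add hax, Real.rpow_one]
    have htend : Tendsto (fun x : ℝ => |x| ^ (p - 1)) (nhds 0) (nhds 0) := by
      have hc : ContinuousAt (fun x : ℝ => |x| ^ (p - 1)) 0 :=
        ContinuousAt.rpow_const continuous_abs.continuousAt (Or.inr (by linarith))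
      simpa [Real.zero_rpow (by linarith : p - 1 ≠ 0)] using hc.tendsto
    have := squeeze_zero_norm key htend
    unfold ContinuousAt
    simpa [fE_zero] using this
  · have h1 : ContinuousAt (fun x : ℝ => (δ + |x|) ^ (p - 2)) r := by
      have hb : ContinuousAt (fun x : ℝ => δ + |x|) r :=
        (continuous_const.add continuous_abs).continuousAt
      exact hb.rpow_const (Or.inl hne)
    exact h1.mul continuousAt_id

lemma fE_tendsto_atTop {p δ : ℝ} (hp : 1 < p) (hδ : 0 ≤ δ) :
    Tendsto (fE p δ) atTop atTop := by
  have hC : (0:ℝ) < fE p δ 1 := fE_pos hδ one_pos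
  apply tendsto_atTop_mono' _ _ ((tendsto_rpow_atTop (mexp_pos hp)).atTop_mul_const hC)
  filter_upwards [eventually_ge_atTop (1:ℝ)] with r hr
  have := fE_scale (r := 1) (Λ := r) hp hδ zero_le_one hr
  rw [mul_one] at this
  exact this

lemma fE_tendsto_atBot {p δ : ℝ} (hp : 1 < p) (hδ : 0 ≤ δ) :
    Tendsto (fE p δ) atBot atBot := by
  have h1 : Tendsto (fun r => fE p δ (-r)) atBot atTop :=
    (fE_tendsto_atTop hp hδ).comp tendsto_neg_atBot_atTop
  have h2 : Tendsto (fun r => - fE p δ (-r)) atBot atBot :=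
    tendsto_neg_atTop_atBot.comp h1
  refine h2.congr (fun r => ?_)
  rw [fE_odd]; ring

lemma exists_h {p δ : ℝ} (hp : 1 < p) (hδ : 0 ≤ δ) :
    ∃ h : ℝ → ℝ, Continuous h ∧ StrictMono h ∧ (∀ r, h (fE p δ r) = r) ∧
      ∀ u, fE p δ (h u) = u := by
  have hsm := fE_strictMono hp hδ
  have hsurj : Function.Surjective (fE p δ) :=
    (fE_continuous hp hδ).surjective (fE_tendsto_atTop hp hδ) (fE_tendsto_atBot hp hδ)
  let e := StrictMono.orderIsoOfSurjective _ hsm hsurj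
  refine ⟨e.symm, e.symm.continuous, e.symm.strictMono, fun r => ?_, fun u => ?_⟩
  · have : e r = fE p δ r := by
      simp [e, StrictMono.coe_orderIsoOfSurjective]
    rw [← this, OrderIso.symm_apply_apply]
  · have h2 : fE p δ (e.symm u) = e (e.symm u) :=
      congrFun (StrictMono.coe_orderIsoOfSurjective _ hsm hsurj) _ |>.symm
    rw [h2, e.apply_symm_apply]



section
variable {p δ : ℝ} {h : ℝ → ℝ}

lemma h_zero (hhf : ∀ r, h (fE p δ r) = r) : h 0 = 0 := by
  have := hhf 0; rwa [fE_zero] at this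

lemma h_nonneg {u : ℝ} (hm : StrictMono h) (hhf : ∀ r, h (fE p δ r) = r) (hu : 0 ≤ u) :
    0 ≤ h u := by
  rw [← h_zero (p := p) (δ := δ) hhf]; exact hm.monotone hu

lemma h_scale {Θ u : ℝ} (hp : 1 < p) (hδ : 0 ≤ δ) (hm : StrictMono h)
    (hhf : ∀ r, h (fE p δ r) = r) (hfh : ∀ u, fE p δ (h u) = u)
    (hΘ : 1 ≤ Θ) (hu : 0 ≤ u) :
    h (Θ * u) ≤ Θ ^ (1 / mexp p) * h u := by
  have hr : 0 ≤ h u := h_nonneg hm hhf hu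
  have hΘ0 : (0:ℝ) ≤ Θ := by linarith
  have hmp := mexp_pos hp
  have hΛ : 1 ≤ Θ ^ (1 / mexp p) :=
    Real.one_le_rpow hΘ (div_nonneg zero_le_one hmp.le)
  have hpow : (Θ ^ (1 / mexp p)) ^ mexp p = Θ := by
    rw [← Real.rpow_mul hΘ0, one_div, inv_mul_cancel₀ hmp.ne', Real.rpow_one]
  have key := fE_scale (r := h u) (Λ := Θ ^ (1 / mexp p)) hp hδ hr hΛ
  rw [hpow, hfh u] at key
  calc h (Θ * u) ≤ h (fE p δ (Θ ^ (1 / mexp p) * h u)) := hm.monotone key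
    _ = Θ ^ (1 / mexp p) * h u := hhf _

lemma uIcc_subset_Ici {x y : ℝ} (hx : 0 ≤ x) (hy : 0 ≤ y) : uIcc x y ⊆ Ici 0 := by
  rcases le_total x y with hxy | hxy
  · rw [uIcc_of_le hxy]; exact fun z hz => le_trans hx hz.1
  · rw [uIcc_of_ge hxy]; exact fun z hz => le_trans hy hz.1

lemma integrand_mono (hp : 1 < p) (hδ : 0 ≤ δ) :
    MonotoneOn (fun s : ℝ => (δ + s) ^ (p - 2) * s) (Ici 0) := by
  intro x hx y hy hxy
  have := ((fE_strictMonoOn hp hδ).monotoneOn) hx hy hxy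
  rwa [fE_eq hx, fE_eq hy] at this

lemma integrand_intble (hp : 1 < p) (hδ : 0 ≤ δ) {x y : ℝ} (hx : 0 ≤ x) (hy : 0 ≤ y) :
    IntervalIntegrable (fun s : ℝ => (δ + s) ^ (p - 2) * s) MeasureTheory.volume x y :=
  ((integrand_mono hp hδ).mono (uIcc_subset_Ici hx hy)).intervalIntegrable

lemma phiFn_zero : phiFn p δ 0 = 0 := intervalIntegral.integral_same

lemma phiFn_nonneg (hδ : 0 ≤ δ) {t : ℝ} (ht : 0 ≤ t) : 0 ≤ phiFn p δ t :=
  intervalIntegral.integral_nonneg ht fun u hu =>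
    mul_nonneg (Real.rpow_nonneg (by linarith [hu.1]) _) hu.1

lemma phiFn_sub (hp : 1 < p) (hδ : 0 ≤ δ) {x y : ℝ} (hx : 0 ≤ x) (hy : 0 ≤ y) :
    phiFn p δ y - phiFn p δ x = ∫ s in x..y, (δ + s) ^ (p - 2) * s :=
  integral_interval_sub_left (integrand_intble hp hδ le_rfl hy) (integrand_intble hp hδ le_rfl hx)

lemma phiFn_le (hp : 1 < p) (hδ : 0 ≤ δ) {s : ℝ} (hs : 0 ≤ s) :
    phiFn p δ s ≤ s * ((δ + s) ^ (p - 2) * s) := by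
  have h1 : phiFn p δ s ≤ ∫ _x in (0:ℝ)..s, (δ + s) ^ (p - 2) * s :=
    intervalIntegral.integral_mono_on hs (integrand_intble hp hδ le_rfl hs)
      intervalIntegrable_const
      (fun x hx => integrand_mono hp hδ hx.1 hs hx.2)
  rw [intervalIntegral.integral_const, smul_eq_mul, sub_zero] at h1
  nlinarith [h1]

lemma key_upper (hp : 1 < p) (hδ : 0 ≤ δ) (hm : StrictMono h)
    (hhf : ∀ r, h (fE p δ r) = r) (hfh : ∀ u, fE p δ (h u) = u)
    {u s : ℝ} (hu : 0 ≤ u) (hs : 0 ≤ s) :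
    s * u - phiFn p δ s ≤ h u * u - phiFn p δ (h u) := by
  set r := h u with hr_def
  have hr : 0 ≤ r := h_nonneg hm hhf hu
  have hfr : (δ + r) ^ (p - 2) * r = u := by
    have := hfh u; rwa [fE_eq hr] at this
  have key : u * (s - r) ≤ phiFn p δ s - phiFn p δ r := by
    rw [phiFn_sub hp hδ hr hs]
    rcases le_total r s with hrs | hsr
    · have hmono : ∫ _x in r..s, u ≤ ∫ x in r..s, (δ + x) ^ (p - 2) * x := by
        apply intervalIntegral.integral_mono_on hrs intervalIntegrable_const
          (integrand_intble hp hδ hr hs)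
        intro x hx
        rw [← hfr]
        exact integrand_mono hp hδ hr (le_trans hr hx.1) hx.1
      rw [intervalIntegral.integral_const, smul_eq_mul] at hmono
      nlinarith [hmono]
    · have hmono : ∫ x in s..r, (δ + x) ^ (p - 2) * x ≤ ∫ _x in s..r, u := by
        apply intervalIntegral.integral_mono_on hsr (integrand_intble hp hδ hs hr)
          intervalIntegrable_const
        intro x hx
        rw [← hfr]
        exact integrand_mono hp hδ (le_trans hs hx.1) hr hx.2
      rw [intervalIntegral.integral_const, smul_eq_mul] at hmono
      rw [intervalIntegral.integral_symm]
      nlinarith [hmono]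
  linarith

lemma isGreatest_fconj (hp : 1 < p) (hδ : 0 ≤ δ) (hm : StrictMono h)
    (hhf : ∀ r, h (fE p δ r) = r) (hfh : ∀ u, fE p δ (h u) = u) {u : ℝ} (hu : 0 ≤ u) :
    IsGreatest ((fun s => s * u - phiFn p δ s) '' Ici 0) (h u * u - phiFn p δ (h u)) := by
  constructor
  · exact mem_image_of_mem _ (h_nonneg hm hhf hu)
  · rintro y ⟨s, hs, rfl⟩
    exact key_upper hp hδ hm hhf hfh hu hs

lemma fconj_eq (hp : 1 < p) (hδ : 0 ≤ δ) (hm : StrictMono h)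
    (hhf : ∀ r, h (fE p δ r) = r) (hfh : ∀ u, fE p δ (h u) = u) {u : ℝ} (hu : 0 ≤ u) :
    fconj (phiFn p δ) u = h u * u - phiFn p δ (h u) :=
  (isGreatest_fconj hp hδ hm hhf hfh hu).csSup_eq

lemma le_fconj (hp : 1 < p) (hδ : 0 ≤ δ) (hm : StrictMono h)
    (hhf : ∀ r, h (fE p δ r) = r) (hfh : ∀ u, fE p δ (h u) = u)
    {u s : ℝ} (hu : 0 ≤ u) (hs : 0 ≤ s) :
    s * u - phiFn p δ s ≤ fconj (phiFn p δ) u :=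
  le_csSup (isGreatest_fconj hp hδ hm hhf hfh hu).bddAbove (mem_image_of_mem _ hs)

lemma fconj_nonpos (hp : 1 < p) (hδ : 0 ≤ δ) {u : ℝ} (hu : u ≤ 0) :
    fconj (phiFn p δ) u = 0 := by
  apply IsGreatest.csSup_eq
  constructor
  · refine ⟨0, Set.mem_Ici.mpr le_rfl, ?_⟩
    simp [phiFn_zero]
  · rintro y ⟨s, hs, rfl⟩
    have h1 : s * u ≤ 0 := mul_nonpos_of_nonneg_of_nonpos hs hu
    have h2 := phiFn_nonneg (p := p) hδ hs
    simp only []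
    linarith

lemma fconj_le (hp : 1 < p) (hδ : 0 ≤ δ) (hm : StrictMono h)
    (hhf : ∀ r, h (fE p δ r) = r) (hfh : ∀ u, fE p δ (h u) = u) {u : ℝ} (hu : 0 ≤ u) :
    fconj (phiFn p δ) u ≤ u * h u := by
  rw [fconj_eq hp hδ hm hhf hfh hu, mul_comm]
  have := phiFn_nonneg (p := p) hδ (h_nonneg hm hhf hu)
  linarith

lemma fconj_ge (hp : 1 < p) (hδ : 0 ≤ δ) (hm : StrictMono h)
    (hhf : ∀ r, h (fE p δ r) = r) (hfh : ∀ u, fE p δ (h u) = u) {u : ℝ} (hu : 0 ≤ u) :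
    u * h u / (2 * (2:ℝ) ^ (1 / mexp p)) ≤ fconj (phiFn p δ) u := by
  set Q := (2:ℝ) ^ (1 / mexp p) with hQdef
  have hQ1 : 1 ≤ Q := Real.one_le_rpow one_le_two (div_nonneg zero_le_one (mexp_pos hp).le)
  have hQ0 : 0 < Q := by linarith
  set s₁ := h (u / 2) with hs₁def
  have hs₁ : 0 ≤ s₁ := h_nonneg hm hhf (by linarith)
  have hφ : phiFn p δ s₁ ≤ s₁ * (u / 2) := by
    have h1 := phiFn_le hp hδ hs₁
    have h2 : (δ + s₁) ^ (p - 2) * s₁ = u / 2 := by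
      have := hfh (u / 2); rwa [fE_eq hs₁] at this
    rwa [h2] at h1
  have hle := le_fconj hp hδ hm hhf hfh (s := s₁) hu hs₁
  have hQs : h u ≤ Q * s₁ := by
    have := h_scale (Θ := 2) (u := u / 2) hp hδ hm hhf hfh one_le_two (by linarith)
    rw [show (2:ℝ) * (u / 2) = u by ring] at this
    exact this
  have hstep : u * h u / (2 * Q) ≤ s₁ * u - s₁ * (u / 2) := by
    have h3 : u * h u ≤ Q * (s₁ * u) := by nlinarith
    rw [div_le_iff₀ (by positivity)]
    nlinarith
  linarith

lemma M_slope (hp : 1 < p) (hδ : 0 ≤ δ) (hm : StrictMono h)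
    (hhf : ∀ r, h (fE p δ r) = r) (hfh : ∀ u, fE p δ (h u) = u)
    {u₁ u₂ : ℝ} (h1 : 0 ≤ u₁) (h12 : u₁ < u₂) :
    h u₁ * (u₂ - u₁) ≤ fconj (phiFn p δ) u₂ - fconj (phiFn p δ) u₁ ∧
      fconj (phiFn p δ) u₂ - fconj (phiFn p δ) u₁ ≤ h u₂ * (u₂ - u₁) := by
  have h2 : 0 ≤ u₂ := le_trans h1 h12.le
  have e1 := fconj_eq hp hδ hm hhf hfh h1
  have e2 := fconj_eq hp hδ hm hhf hfh h2
  have l1 : h u₂ * u₁ - phiFn p δ (h u₂) ≤ fconj (phiFn p δ) u₁ :=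
    le_fconj hp hδ hm hhf hfh h1 (h_nonneg hm hhf h2)
  have l2 : h u₁ * u₂ - phiFn p δ (h u₁) ≤ fconj (phiFn p δ) u₂ :=
    le_fconj hp hδ hm hhf hfh h2 (h_nonneg hm hhf h1)
  constructor
  · nlinarith [l2, e1]
  · nlinarith [l1, e2]

lemma hasDerivAt_M (hp : 1 < p) (hδ : 0 ≤ δ) (hcont : Continuous h) (hm : StrictMono h)
    (hhf : ∀ r, h (fE p δ r) = r) (hfh : ∀ u, fE p δ (h u) = u) {u : ℝ} (hu : 0 ≤ u) :
    HasDerivAt (fconj (phiFn p δ)) (h u) u := by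
  set M := fconj (phiFn p δ) with hMdef
  rw [hasDerivAt_iff_tendsto_slope]
  have key : ∀ v, v ≠ u → (0 ≤ v ∨ u = 0) → |slope M u v - h u| ≤ |h v - h u| := by
    intro v hv hcase
    rcases lt_or_gt_of_ne hv with hlt | hgt
    · rcases hcase with hv0 | hu0
      · have hb := M_slope hp hδ hm hhf hfh hv0 hlt
        have hd : 0 < u - v := by linarith
        have hs : slope M u v = (M u - M v) / (u - v) := by
          rw [slope_def_field]
          rw [show M v - M u = -(M u - M v) by ring, show v - u = -(u - v) by ring, neg_div_neg_eq]
        have hle1 : h v ≤ (M u - M v) / (u - v) := (le_div_iff₀ hd).2 (by nlinarith [hb.1])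
        have hle2 : (M u - M v) / (u - v) ≤ h u := (div_le_iff₀ hd).2 (by nlinarith [hb.2])
        have hvu : h v ≤ h u := hm.monotone hlt.le
        rw [hs, abs_of_nonpos (by linarith), abs_of_nonpos (by linarith)]
        linarith
      · subst hu0
        have hv0 : v < 0 := hlt
        have hMv : M v = 0 := fconj_nonpos hp hδ hv0.le
        have hMu : M 0 = 0 := fconj_nonpos hp hδ le_rfl
        have hs : slope M 0 v = 0 := by
          rw [slope_def_field, hMv, hMu]; simp
        rw [hs, h_zero (p := p) (δ := δ) hhf]
        simp
    · have hb := M_slope hp hδ hm hhf hfh hu hgt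
      have hd : 0 < v - u := by linarith
      have hs : slope M u v = (M v - M u) / (v - u) := slope_def_field M u v
      have hle1 : h u ≤ (M v - M u) / (v - u) := (le_div_iff₀ hd).2 (by nlinarith [hb.1])
      have hle2 : (M v - M u) / (v - u) ≤ h v := (div_le_iff₀ hd).2 (by nlinarith [hb.2])
      have hvu : h u ≤ h v := hm.monotone hgt.le
      rw [hs, abs_of_nonneg (by linarith), abs_of_nonneg (by linarith)]
      linarith
  rw [tendsto_iff_dist_tendsto_zero]
  have htd : Tendsto (fun v => |h v - h u|) (nhdsWithin u {u}ᶜ) (nhds 0) := by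
    have h1 : Tendsto (fun v => h v - h u) (nhds u) (nhds 0) := by
      simpa using (hcont.tendsto u).sub (tendsto_const_nhds (x := h u))
    have h2 : Tendsto (fun v => |h v - h u|) (nhds u) (nhds 0) := by
      simpa using h1.abs
    exact h2.mono_left nhdsWithin_le_nhds
  apply squeeze_zero' (Eventually.of_forall fun v => dist_nonneg) _ htd
  rcases hu.eq_or_lt with rfl | hu0
  · filter_upwards [self_mem_nhdsWithin] with v hv
    rw [Real.dist_eq]
    exact key v hv (Or.inr rfl)
  · have hmem : ∀ᶠ v in nhds u, (0:ℝ) ≤ v :=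
      eventually_of_mem (Ioi_mem_nhds hu0) fun v hv => le_of_lt hv
    filter_upwards [eventually_nhdsWithin_of_eventually_nhds hmem, self_mem_nhdsWithin]
      with v hv0 hvne
    rw [Real.dist_eq]
    exact key v hvne (Or.inl hv0)

lemma deriv_M (hp : 1 < p) (hδ : 0 ≤ δ) (hcont : Continuous h) (hm : StrictMono h)
    (hhf : ∀ r, h (fE p δ r) = r) (hfh : ∀ u, fE p δ (h u) = u) {u : ℝ} (hu : 0 ≤ u) :
    deriv (fconj (phiFn p δ)) u = h u :=
  (hasDerivAt_M hp hδ hcont hm hhf hfh hu).deriv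



lemma integral_bounds {G : ℝ → ℝ} {t : ℝ} (ht : 0 ≤ t)
    (hmono : MonotoneOn G (Icc 0 t)) (h0 : 0 ≤ G 0) :
    t / 2 * G (t / 2) ≤ (∫ s in (0:ℝ)..t, G s) ∧ (∫ s in (0:ℝ)..t, G s) ≤ t * G t := by
  have ht2 : (0:ℝ) ≤ t / 2 := by linarith
  have hsub1 : uIcc 0 (t/2) ⊆ Icc 0 t := by
    rw [uIcc_of_le ht2]; exact Icc_subset_Icc le_rfl (by linarith)
  have hsub2 : uIcc (t/2) t ⊆ Icc 0 t := by
    rw [uIcc_of_le (by linarith)]; exact Icc_subset_Icc ht2 le_rfl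
  have hsub : uIcc 0 t ⊆ Icc 0 t := by rw [uIcc_of_le ht]
  have hi : IntervalIntegrable G MeasureTheory.volume 0 t :=
    (hmono.mono hsub).intervalIntegrable
  have hi1 : IntervalIntegrable G MeasureTheory.volume 0 (t/2) :=
    (hmono.mono hsub1).intervalIntegrable
  have hi2 : IntervalIntegrable G MeasureTheory.volume (t/2) t :=
    (hmono.mono hsub2).intervalIntegrable
  constructor
  · have hsplit : (∫ s in (0:ℝ)..(t/2), G s) + ∫ s in (t/2)..t, G s = ∫ s in (0:ℝ)..t, G s :=
      integral_add_adjacent_intervals hi1 hi2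
    have hp1 : 0 ≤ ∫ s in (0:ℝ)..(t/2), G s :=
      intervalIntegral.integral_nonneg ht2 (fun u hu =>
        le_trans h0 (hmono ⟨le_rfl, ht⟩ ⟨hu.1, le_trans hu.2 (by linarith)⟩ hu.1))
    have hp2 : (t - t/2) * G (t/2) ≤ ∫ s in (t/2)..t, G s := by
      have hmon := intervalIntegral.integral_mono_on (by linarith : t/2 ≤ t)
        intervalIntegrable_const hi2
        (fun x hx => hmono ⟨ht2, by linarith⟩ ⟨le_trans ht2 hx.1, hx.2⟩ hx.1)
      rw [intervalIntegral.integral_const, smul_eq_mul] at hmon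
      exact hmon
    have : (t:ℝ) - t/2 = t/2 := by ring
    rw [this] at hp2
    linarith
  · have hmon := intervalIntegral.integral_mono_on ht hi
      intervalIntegrable_const (fun x hx => hmono hx ⟨ht, le_rfl⟩ hx.2)
    rw [intervalIntegral.integral_const, smul_eq_mul, sub_zero] at hmon
    exact hmon

lemma H_mono {c : ℝ} (hm : StrictMono h) (hhf : ∀ r, h (fE p δ r) = r) (hc : 0 ≤ c) :
    MonotoneOn (fun s => h (c + s) * (s / (c + s))) (Ici 0) := by
  intro x hx y hy hxy
  simp only [mem_Ici] at hx hy
  have h1 : h (c + x) ≤ h (c + y) := hm.monotone (by linarith)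
  have h2 : x / (c + x) ≤ y / (c + y) := by
    rcases (add_nonneg hc hx).eq_or_lt with h0 | h0
    · rw [← h0, div_zero]
      exact div_nonneg hy (add_nonneg hc hy)
    · have hcy : 0 < c + y := by linarith
      rw [div_le_div_iff₀ h0 hcy]; nlinarith
  have h3 : 0 ≤ x / (c + x) := div_nonneg hx (add_nonneg hc hx)
  have h4 : 0 ≤ h (c + y) := h_nonneg hm hhf (add_nonneg hc hy)
  exact mul_le_mul h1 h2 h3 h4

lemma shiftOf_eval (hp : 1 < p) (hδ : 0 ≤ δ) (hcont : Continuous h) (hm : StrictMono h)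
    (hhf : ∀ r, h (fE p δ r) = r) (hfh : ∀ u, fE p δ (h u) = u)
    {c t : ℝ} (hc : 0 ≤ c) (ht : 0 ≤ t) :
    shiftOf (fconj (phiFn p δ)) c t = ∫ s in (0:ℝ)..t, h (c + s) * (s / (c + s)) := by
  apply intervalIntegral.integral_congr
  intro u hu
  have hu0 : 0 ≤ u := uIcc_subset_Ici le_rfl ht hu
  simp only
  rw [deriv_M hp hδ hcont hm hhf hfh (add_nonneg hc hu0)]

lemma S_upper (hm : StrictMono h) (hhf : ∀ r, h (fE p δ r) = r)
    {c t : ℝ} (hc : 0 ≤ c) (ht : 0 ≤ t) :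
    (∫ s in (0:ℝ)..t, h (c + s) * (s / (c + s))) ≤ t * (h (c + t) * (t / (c + t))) :=
  (integral_bounds ht ((H_mono hm hhf hc).mono (Icc_subset_Ici_self)) (by simp)).2

lemma S_lower (hp : 1 < p) (hδ : 0 ≤ δ) (hm : StrictMono h)
    (hhf : ∀ r, h (fE p δ r) = r) (hfh : ∀ u, fE p δ (h u) = u)
    {c t : ℝ} (hc : 0 ≤ c) (ht : 0 ≤ t) :
    t * (h (c + t) * (t / (c + t))) / (4 * (2:ℝ) ^ (1 / mexp p)) ≤
      ∫ s in (0:ℝ)..t, h (c + s) * (s / (c + s)) := by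
  have hQ1 : 1 ≤ (2:ℝ) ^ (1 / mexp p) :=
    Real.one_le_rpow one_le_two (div_nonneg zero_le_one (mexp_pos hp).le)
  set Q := (2:ℝ) ^ (1 / mexp p) with hQdef
  have hb := (integral_bounds ht ((H_mono hm hhf hc).mono (Icc_subset_Ici_self)) (by simp)).1
  rcases ht.eq_or_lt with rfl | ht0
  · simp
  have hD : 0 < c + t := by linarith
  have hD2 : 0 < c + t / 2 := by linarith
  have hx : h (c + t) ≤ Q * h (c + t / 2) := by
    have hs := h_scale (Θ := 2) (u := c + t / 2) hp hδ hm hhf hfh one_le_two (by linarith)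
    have : c + t ≤ 2 * (c + t / 2) := by linarith
    calc h (c + t) ≤ h (2 * (c + t / 2)) := hm.monotone this
      _ ≤ Q * h (c + t / 2) := hs
  have hy : 0 ≤ h (c + t / 2) := h_nonneg hm hhf (by linarith)
  have hden : (t / 2) / (c + t) ≤ (t / 2) / (c + t / 2) :=
    div_le_div_of_nonneg_left (by linarith) hD2 (by linarith)
  have hkey : t * (h (c + t) * (t / (c + t))) / (4 * Q) ≤
      t / 2 * (h (c + t / 2) * (t / 2 / (c + t / 2))) := by
    have step1 : t / 2 * (h (c + t / 2) * (t / 2 / (c + t / 2))) ≥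
        t / 2 * (h (c + t / 2) * (t / 2 / (c + t))) := by
      apply mul_le_mul_of_nonneg_left (mul_le_mul_of_nonneg_left hden hy) (by linarith)
    have step2 : t / 2 * (h (c + t / 2) * (t / 2 / (c + t))) ≥
        t * (h (c + t) * (t / (c + t))) / (4 * Q) := by
      rw [ge_iff_le, div_le_iff₀ (by positivity), div_eq_mul_inv (t/2), div_eq_mul_inv t]
      have hinv : (0:ℝ) ≤ (c + t)⁻¹ := by positivity
      have hQ0 : (0:ℝ) < Q := by linarith
      have hxx : h (c + t) * t ≤ Q * h (c + t/2) * t := by nlinarith [hx, ht0]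
      nlinarith [mul_le_mul_of_nonneg_right hxx hinv, ht0.le, hinv]
    linarith
  linarith

lemma rpow_ratio (hp : 1 < p) {x y : ℝ} (hx : 0 < x) (hxy : x ≤ y) (hy2 : y ≤ 2 * x) :
    y ^ (p-2) ≤ (2:ℝ) ^ |p-2| * x ^ (p-2) ∧ x ^ (p-2) ≤ (2:ℝ) ^ |p-2| * y ^ (p-2) := by
  rcases le_total 2 p with h2 | h2
  · have hE : |p-2| = p-2 := abs_of_nonneg (by linarith)
    rw [hE]
    constructor
    · calc y^(p-2) ≤ (2*x)^(p-2) := Real.rpow_le_rpow (by linarith) hy2 (by linarith)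
        _ = 2^(p-2) * x^(p-2) := Real.mul_rpow (by norm_num) hx.le
    · have hmn : x^(p-2) ≤ y^(p-2) := Real.rpow_le_rpow hx.le hxy (by linarith)
      have h1 : 1 ≤ (2:ℝ)^(p-2) := Real.one_le_rpow one_le_two (by linarith)
      nlinarith [Real.rpow_nonneg (le_trans hx.le hxy) (p-2)]
  · have hE : |p-2| = 2-p := by rw [abs_of_nonpos (by linarith)]; ring
    rw [hE]
    constructor
    · have hmn : y^(p-2) ≤ x^(p-2) := Real.rpow_le_rpow_of_nonpos hx hxy (by linarith)
      have h1 : 1 ≤ (2:ℝ)^(2-p) := Real.one_le_rpow one_le_two (by linarith)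
      nlinarith [Real.rpow_nonneg hx.le (p-2)]
    · have hstep : (2*x)^(p-2) ≤ y^(p-2) :=
        Real.rpow_le_rpow_of_nonpos (by linarith) hy2 (by linarith)
      rw [Real.mul_rpow (by norm_num) hx.le] at hstep
      have hid : (2:ℝ)^(2-p) * ((2:ℝ)^(p-2) * x^(p-2)) = x^(p-2) := by
        rw [← mul_assoc, ← Real.rpow_add two_pos]
        norm_num
      calc x^(p-2) = (2:ℝ)^(2-p) * ((2:ℝ)^(p-2)*x^(p-2)) := hid.symm
        _ ≤ (2:ℝ)^(2-p) * y^(p-2) :=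
            mul_le_mul_of_nonneg_left hstep (Real.rpow_nonneg (by norm_num) _)

lemma invert (hp : 1 < p) (hδ : 0 ≤ δ) (hm : StrictMono h)
    (hhf : ∀ r, h (fE p δ r) = r) (hfh : ∀ u, fE p δ (h u) = u)
    {x t K : ℝ} (hx : 0 ≤ x) (ht : 0 ≤ t) (hK : 1 ≤ K)
    (h1 : t ≤ K * fE p δ x) (h2 : fE p δ x ≤ K * t) :
    h t ≤ K ^ (1/mexp p) * x ∧ x ≤ K ^ (1/mexp p) * h t := by
  constructor
  · have ha : h t ≤ h (K * fE p δ x) := hm.monotone h1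
    have h3 := h_scale (Θ := K) (u := fE p δ x) hp hδ hm hhf hfh hK (fE_nonneg hδ hx)
    rw [hhf x] at h3
    linarith
  · have h4 : x = h (fE p δ x) := (hhf x).symm
    have ha : h (fE p δ x) ≤ h (K * t) := hm.monotone h2
    have h5 := h_scale (Θ := K) (u := t) hp hδ hm hhf hfh hK ht
    linarith [h4 ▸ ha]


lemma bridge (hp : 1 < p) (hδ : 0 ≤ δ) {A t : ℝ} (hA : 0 ≤ A) (ht : 0 ≤ t)
    (hcont : Continuous h) (hm : StrictMono h)
    (hhf : ∀ r, h (fE p δ r) = r) (hfh : ∀ u, fE p δ (h u) = u)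
    {g : ℝ → ℝ} (gm : StrictMono g)
    (ghf : ∀ r, g (fE p (δ+A) r) = r) (gfh : ∀ u, fE p (δ+A) (g u) = u) :
    g t ≤ 2 * ((2:ℝ)^|p-2|) ^ (1/mexp p) * (h (fE p δ A + t) * (t / (fE p δ A + t)))
    ∧ h (fE p δ A + t) * (t / (fE p δ A + t)) ≤
        ((2:ℝ)^|p-2|) ^ (1/mexp p) * ((2:ℝ) ^ (1/mexp p)) * g t := by
  have hmp := mexp_pos hp
  have hL0 : (0:ℝ) ≤ 1 / mexp p := div_nonneg zero_le_one hmp.le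
  have hKE1 : 1 ≤ (2:ℝ)^|p-2| := Real.one_le_rpow one_le_two (abs_nonneg _)
  have hKEL1 : 1 ≤ ((2:ℝ)^|p-2|) ^ (1/mexp p) := Real.one_le_rpow hKE1 hL0
  have hQ1 : 1 ≤ (2:ℝ) ^ (1/mexp p) := Real.one_le_rpow one_le_two hL0
  set KE := (2:ℝ)^|p-2| with hKEdef
  set KEL := KE ^ (1/mexp p) with hKELdef
  set Q := (2:ℝ) ^ (1/mexp p) with hQdef
  set c := fE p δ A with hcdef
  have hc : 0 ≤ c := fE_nonneg hδ hA
  rcases ht.eq_or_lt with rfl | ht0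
  · have hg0 : g 0 = 0 := h_zero ghf
    have hz : h (c + 0) * (0 / (c + 0)) = 0 := by simp
    rw [hg0, hz]
    constructor <;> simp
  -- t > 0 from here
  have hD : 0 < c + t := by linarith
  -- we find w with the two-sided estimate
  obtain ⟨w, hw0, hw1, hw2, hwH1, hwH2⟩ :
      ∃ w, 0 ≤ w ∧ t ≤ KE * fE p (δ+A) w ∧ fE p (δ+A) w ≤ KE * t ∧
        h (c + t) * (t / (c + t)) ≤ Q * w ∧ w ≤ 2 * (h (c + t) * (t / (c + t))) := by
    rcases le_or_gt c t with hct | htc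
    · -- case c ≤ t : w = h t
      refine ⟨h t, h_nonneg hm hhf ht0.le, ?_, ?_, ?_, ?_⟩
      · -- t ≤ KE * fE p (δ+A) (h t)
        have hht : 0 < h t := by
          have := hm (show (0:ℝ) < t from ht0)
          rwa [h_zero (p := p) (δ := δ) hhf] at this
        have hxpos : 0 < δ + h t := by linarith
        have hAht : A ≤ h t := by
          have : h c ≤ h t := hm.monotone hct
          rwa [hcdef, hhf A] at this
        have hr := rpow_ratio hp hxpos (by linarith : δ + h t ≤ δ + A + h t)
          (by linarith : δ + A + h t ≤ 2 * (δ + h t))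
        have hteq : (δ + h t) ^ (p-2) * h t = t := by
          have := hfh t; rwa [fE_eq (h_nonneg hm hhf ht0.le)] at this
        rw [fE_eq (h_nonneg hm hhf ht0.le)]
        calc t = (δ + h t) ^ (p-2) * h t := hteq.symm
          _ ≤ (KE * (δ + A + h t) ^ (p-2)) * h t :=
              mul_le_mul_of_nonneg_right hr.2 hht.le
          _ = KE * ((δ + A + h t) ^ (p-2) * h t) := by ring
      · have hht : 0 ≤ h t := h_nonneg hm hhf ht0.le
        have hht' : 0 < h t := by
          have := hm (show (0:ℝ) < t from ht0)
          rwa [h_zero (p := p) (δ := δ) hhf] at this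
        have hxpos : 0 < δ + h t := by linarith
        have hAht : A ≤ h t := by
          have : h c ≤ h t := hm.monotone hct
          rwa [hcdef, hhf A] at this
        have hr := rpow_ratio hp hxpos (by linarith : δ + h t ≤ δ + A + h t)
          (by linarith : δ + A + h t ≤ 2 * (δ + h t))
        have hteq : (δ + h t) ^ (p-2) * h t = t := by
          have := hfh t; rwa [fE_eq hht] at this
        rw [fE_eq hht]
        calc (δ + A + h t) ^ (p-2) * h t ≤ (KE * (δ + h t) ^ (p-2)) * h t :=
              mul_le_mul_of_nonneg_right hr.1 hht
          _ = KE * ((δ + h t) ^ (p-2) * h t) := by ring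
          _ = KE * t := by rw [hteq]
      · -- h(c+t)*(t/(c+t)) ≤ Q * h t
        have h1 : h (c + t) ≤ Q * h t := by
          have hs := h_scale (Θ := 2) (u := t) hp hδ hm hhf hfh one_le_two ht0.le
          calc h (c + t) ≤ h (2 * t) := hm.monotone (by linarith)
            _ ≤ Q * h t := hs
        have h2 : t / (c + t) ≤ 1 := (div_le_one hD).2 (by linarith)
        have h3 : 0 ≤ h (c + t) := h_nonneg hm hhf hD.le
        have h4 : 0 ≤ t / (c + t) := div_nonneg ht0.le hD.le
        calc h (c + t) * (t / (c + t)) ≤ h (c + t) * 1 :=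
              mul_le_mul_of_nonneg_left h2 h3
          _ = h (c + t) := mul_one _
          _ ≤ Q * h t := h1
      · -- h t ≤ 2 * (h(c+t)*(t/(c+t)))
        have h1 : h t ≤ h (c + t) := hm.monotone (by linarith)
        have h2 : (1:ℝ)/2 ≤ t / (c + t) := by
          rw [div_le_div_iff₀ (by norm_num) hD]; linarith
        have h3 : 0 ≤ h t := h_nonneg hm hhf ht0.le
        nlinarith [h_nonneg hm hhf hD.le]
    · -- case t < c : w = A * t / c
      have hc0 : 0 < c := by linarith
      have hA0 : 0 < A := by
        rcases hA.eq_or_lt with rfl | h; · rw [hcdef, fE_zero] at hc0; linarith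
        · exact h
      have hb0 : 0 < δ + A := by linarith
      set w := A * t / c with hwdef
      have hw0 : 0 ≤ w := by positivity
      have hwA : w ≤ A := by
        rw [hwdef, div_le_iff₀ hc0]; nlinarith
      have hceq : c = (δ + A) ^ (p-2) * A := by rw [hcdef, fE_eq hA]
      have hbw : (δ + A) ^ (p-2) * w = t := by
        rw [hwdef, hceq]; field_simp
      have hr := rpow_ratio hp hb0 (by linarith : δ + A ≤ δ + A + w)
        (by linarith : δ + A + w ≤ 2 * (δ + A))
      have hfEw : fE p (δ+A) w = (δ + A + w) ^ (p-2) * w := fE_eq hw0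
      have hAc : A = h c := (hhf A).symm
      have hhct : h (c + t) ≤ Q * A := by
        have hs := h_scale (Θ := 2) (u := c) hp hδ hm hhf hfh one_le_two hc0.le
        calc h (c + t) ≤ h (2 * c) := hm.monotone (by linarith)
          _ ≤ Q * h c := hs
          _ = Q * A := by rw [← hAc]
      have hhct' : A ≤ h (c + t) := by
        rw [hAc]; exact hm.monotone (by linarith)
      refine ⟨w, hw0, ?_, ?_, ?_, ?_⟩
      · rw [hfEw]
        calc t = (δ + A) ^ (p-2) * w := hbw.symm
          _ ≤ (KE * (δ + A + w) ^ (p-2)) * w := mul_le_mul_of_nonneg_right hr.2 hw0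
          _ = KE * ((δ + A + w) ^ (p-2) * w) := by ring
      · rw [hfEw]
        calc (δ + A + w) ^ (p-2) * w ≤ (KE * (δ + A) ^ (p-2)) * w :=
              mul_le_mul_of_nonneg_right hr.1 hw0
          _ = KE * ((δ + A) ^ (p-2) * w) := by ring
          _ = KE * t := by rw [hbw]
      · -- h(c+t)*(t/(c+t)) ≤ Q * w
        have h2 : t / (c + t) ≤ t / c := div_le_div_of_nonneg_left ht0.le hc0 (by linarith)
        have h4 : 0 ≤ t / (c + t) := div_nonneg ht0.le hD.le
        calc h (c + t) * (t / (c + t)) ≤ (Q * A) * (t / (c + t)) :=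
              mul_le_mul_of_nonneg_right hhct h4
          _ ≤ (Q * A) * (t / c) := by
              apply mul_le_mul_of_nonneg_left h2 (by positivity)
          _ = Q * w := by rw [hwdef]; ring
      · -- w ≤ 2 * (h(c+t)*(t/(c+t)))
        have h2 : t / (2*c) ≤ t / (c + t) := div_le_div_of_nonneg_left ht0.le hD (by linarith)
        have h3 : 0 ≤ h (c + t) := h_nonneg hm hhf hD.le
        calc w = A * (t / c) := by rw [hwdef]; ring
          _ = 2 * (A * (t / (2*c))) := by field_simp
          _ ≤ 2 * (A * (t / (c + t))) := by
              apply mul_le_mul_of_nonneg_left (mul_le_mul_of_nonneg_left h2 hA0.le) (by norm_num)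
          _ ≤ 2 * (h (c + t) * (t / (c + t))) := by
              apply mul_le_mul_of_nonneg_left
                (mul_le_mul_of_nonneg_right hhct' (div_nonneg ht0.le hD.le)) (by norm_num)
  -- now conclude via invert with δ := δ + A
  have hinv := invert (δ := δ + A) hp (by linarith) gm ghf gfh hw0 ht0.le hKE1 hw1 hw2
  constructor
  · -- g t ≤ 2 * KEL * Hv
    have h1 : g t ≤ KEL * w := hinv.1
    calc g t ≤ KEL * w := h1
      _ ≤ KEL * (2 * (h (c + t) * (t / (c + t)))) :=
          mul_le_mul_of_nonneg_left hwH2 (by linarith)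
      _ = 2 * KEL * (h (c + t) * (t / (c + t))) := by ring
  · -- Hv ≤ KEL * Q * g t
    have h1 : w ≤ KEL * g t := hinv.2
    calc h (c + t) * (t / (c + t)) ≤ Q * w := hwH1
      _ ≤ Q * (KEL * g t) := mul_le_mul_of_nonneg_left h1 (by linarith)
      _ = KEL * Q * g t := by ring



lemma shiftPhi_eq {A : ℝ} (hA : 0 ≤ A) {s : ℝ} (hs : 0 ≤ s) :
    shiftPhi p δ A s = phiFn p (δ + A) s := by
  apply intervalIntegral.integral_congr
  intro u hu
  have hu0 : 0 ≤ u := uIcc_subset_Ici le_rfl hs hu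
  simp only
  rcases (add_nonneg hA hu0).eq_or_lt with h0 | h0
  · have hA0 : A = 0 := by linarith
    have hu0' : u = 0 := by linarith
    rw [hA0, hu0']
    norm_num
  · rw [show δ + (A + u) = δ + A + u by ring]
    field_simp

lemma fconj_shiftPhi {A : ℝ} (hA : 0 ≤ A) (t : ℝ) :
    fconj (shiftPhi p δ A) t = fconj (phiFn p (δ + A)) t := by
  unfold fconj
  congr 1
  apply image_congr
  intro s hs
  rw [shiftPhi_eq hA hs]

end

theorem stmt7_aux (d : ℕ) (p δ : ℝ) (hp : 1 < p) (hδ : 0 ≤ δ) :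
    ∃ c > (0:ℝ), ∃ C > (0:ℝ), ∀ a : EuclideanSpace ℝ (Fin d), ∀ t ≥ (0:ℝ),
      c * fconj (shiftPhi p δ ‖a‖) t ≤
        shiftOf (fconj (phiFn p δ)) ‖(δ + ‖a‖) ^ (p - 2) • a‖ t ∧
      shiftOf (fconj (phiFn p δ)) ‖(δ + ‖a‖) ^ (p - 2) • a‖ t ≤
        C * fconj (shiftPhi p δ ‖a‖) t := by
  have hmp := mexp_pos hp
  have hL0 : (0:ℝ) ≤ 1/mexp p := by positivity
  have hQ1 : 1 ≤ (2:ℝ) ^ (1/mexp p) := Real.one_le_rpow one_le_two hL0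
  have hKEL1 : 1 ≤ ((2:ℝ)^|p-2|) ^ (1/mexp p) :=
    Real.one_le_rpow (Real.one_le_rpow one_le_two (abs_nonneg _)) hL0
  set Q := (2:ℝ) ^ (1/mexp p) with hQdef
  set KEL := ((2:ℝ)^|p-2|) ^ (1/mexp p) with hKELdef
  have hQ0 : (0:ℝ) < Q := by linarith
  have hKEL0 : (0:ℝ) < KEL := by linarith
  refine ⟨1 / (4*Q*(2*KEL)), by positivity, (KEL*Q)*(2*Q), by positivity, ?_⟩
  intro a t ht
  obtain ⟨h, hcont, hm, hhf, hfh⟩ := exists_h hp hδ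
  have hA : 0 ≤ ‖a‖ := norm_nonneg a
  set A := ‖a‖ with hAdef
  have hδA : 0 ≤ δ + A := by linarith
  obtain ⟨g, gcont, gm, ghf, gfh⟩ := exists_h hp hδA
  have hnorm : ‖(δ + ‖a‖) ^ (p - 2) • a‖ = fE p δ A := by
    rw [norm_smul, Real.norm_eq_abs, abs_of_nonneg (Real.rpow_nonneg (by linarith) _), fE_eq hA]
  set c := fE p δ A with hcdef
  have hc : 0 ≤ c := fE_nonneg hδ hA
  have hmid : shiftOf (fconj (phiFn p δ)) ‖(δ + ‖a‖) ^ (p - 2) • a‖ t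
      = ∫ s in (0:ℝ)..t, h (c + s) * (s / (c + s)) := by
    rw [hnorm]
    exact shiftOf_eval hp hδ hcont hm hhf hfh hc ht
  set S := ∫ s in (0:ℝ)..t, h (c + s) * (s / (c + s)) with hSdef
  set Hv := h (c + t) * (t / (c + t)) with hHvdef
  have hSup : S ≤ t * Hv := S_upper hm hhf hc ht
  have hSlo : t * Hv / (4 * Q) ≤ S := S_lower hp hδ hm hhf hfh hc ht
  have hR : fconj (shiftPhi p δ ‖a‖) t = fconj (phiFn p (δ + A)) t := fconj_shiftPhi hA t
  set R := fconj (phiFn p (δ + A)) t with hRdef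
  have hRup : R ≤ t * g t := fconj_le hp hδA gm ghf gfh ht
  have hRlo : t * g t / (2 * Q) ≤ R := fconj_ge hp hδA gm ghf gfh ht
  have hbr := bridge hp hδ hA ht hcont hm hhf hfh gm ghf gfh
  have hHv0 : 0 ≤ Hv :=
    mul_nonneg (h_nonneg hm hhf (add_nonneg hc ht)) (div_nonneg ht (add_nonneg hc ht))
  have hg0 : 0 ≤ g t := h_nonneg gm ghf ht
  rw [hmid, hR]
  constructor
  · have h1 : R ≤ 2*KEL*(t*Hv) := by
      calc R ≤ t * g t := hRup
        _ ≤ t * (2 * KEL * Hv) := mul_le_mul_of_nonneg_left hbr.1 ht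
        _ = 2*KEL*(t*Hv) := by ring
    have h2 : t*Hv ≤ 4*Q*S := by
      rw [div_le_iff₀ (by positivity)] at hSlo
      linarith
    rw [div_mul_eq_mul_div, one_mul, div_le_iff₀ (by positivity)]
    calc R ≤ 2*KEL*(t*Hv) := h1
      _ ≤ 2*KEL*(4*Q*S) := mul_le_mul_of_nonneg_left h2 (by positivity)
      _ = S * (4*Q*(2*KEL)) := by ring
  · have h1 : t*Hv ≤ KEL*Q*(t*g t) := by
      calc t*Hv ≤ t*(KEL * Q * g t) := mul_le_mul_of_nonneg_left hbr.2 ht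
        _ = KEL*Q*(t*g t) := by ring
    have h2 : t*g t ≤ 2*Q*R := by
      rw [div_le_iff₀ (by positivity)] at hRlo
      linarith
    calc S ≤ t*Hv := hSup
      _ ≤ KEL*Q*(t*g t) := h1
      _ ≤ KEL*Q*(2*Q*R) := mul_le_mul_of_nonneg_left h2 (by positivity)
      _ = KEL*Q*(2*Q)*R := by ring

end Stmt7A


theorem stmt7 (d : ℕ) (p δ : ℝ) (hp : 1 < p) (hδ : 0 ≤ δ) :
    ∃ c > (0:ℝ), ∃ C > (0:ℝ), ∀ a : EuclideanSpace ℝ (Fin d), ∀ t ≥ (0:ℝ),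
      c * fconj (shiftPhi p δ ‖a‖) t ≤
        shiftOf (fconj (phiFn p δ)) ‖(δ + ‖a‖) ^ (p - 2) • a‖ t ∧
      shiftOf (fconj (phiFn p δ)) ‖(δ + ‖a‖) ^ (p - 2) • a‖ t ≤
        C * fconj (shiftPhi p δ ‖a‖) t :=
  Stmt7A.stmt7_aux d p δ hp hδ
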